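/- Suppose d ≥ 1, let D_1 be the largest submodule of M with dim_R(D_1) < d, and let x ∈ m be a parameter element of M (i.e., dim_R(M/xM) = d − 1) such that x ∈ Ann_R(D_1). Then D_1 = (0 :_M x) = (0 :_M x^2) and D_1 ∩ xM = 0. -/

import Mathlib

open CategoryTheory

noncomputable section

/-- The `i`-th local cohomology module of `M` with respect to the ideal `I`,
as an object of `ModuleCat R`. -/
noncomputable def locH (R : Type) [CommRing R] (I : Ideal R) (i : ℕ)
    (M : Type) [AddCommGroup M] [Module R M] : ModuleCat R :=
  (localCohomology I i).obj (ModuleCat.of R M)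

/-- The Krull dimension of the `R`-module `M`, i.e. the Krull dimension of `R / Ann_R M`. -/
noncomputable def mdim (R : Type) [CommRing R]
    (M : Type) [AddCommGroup M] [Module R M] : WithBot ℕ∞ :=
  ringKrullDim (R ⧸ Module.annihilator R M)

/-- `M` is a `p`-secondary module: `M ≠ 0`, every `r ∈ p` acts nilpotently on `M`,
and every `r ∉ p` acts surjectively on `M`. -/
def IsSecondaryFor (R : Type) [CommRing R]
    (M : Type) [AddCommGroup M] [Module R M] (p : Ideal R) : Prop :=
  (∃ x : M, x ≠ 0) ∧
    (∀ r ∈ p, ∃ n : ℕ, ∀ x : M, r ^ n • x = 0) ∧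
    (∀ r : R, r ∉ p → Function.Surjective (fun x : M => r • x))

/-- The set of attached primes of `M` (in the sense of Macdonald): the primes `p` such that
`M` has a `p`-secondary quotient.  For representable (e.g. Artinian) modules this agrees with
the set of primes appearing in a minimal secondary representation. -/
def attachedPrimes (R : Type) [CommRing R]
    (M : Type) [AddCommGroup M] [Module R M] : Set (Ideal R) :=
  { p | p.IsPrime ∧ ∃ N : Submodule R M, IsSecondaryFor R (M ⧸ N) p }

/-- `x ∈ m` is an `M`-sequential element: `x` avoids every attached prime of
`H^j_m(M)` for `1 ≤ j ≤ dim M`. -/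
def IsSequentialElem (R : Type) [CommRing R] (m : Ideal R)
    (M : Type) [AddCommGroup M] [Module R M] (x : R) : Prop :=
  x ∈ m ∧ ∀ j : ℕ, 1 ≤ j → ((j : ℕ∞) : WithBot ℕ∞) ≤ mdim R M →
    ∀ p ∈ attachedPrimes R ↥(locH R m j M), x ∉ p

/-- `x ∈ m` is an `M`-sequential f-element: `x` avoids every attached prime of
`H^j_m(M)`, other than `m` itself, for `2 ≤ j ≤ dim M`. -/
def IsSequentialFElem (R : Type) [CommRing R] (m : Ideal R)
    (M : Type) [AddCommGroup M] [Module R M] (x : R) : Prop :=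
  x ∈ m ∧ ∀ j : ℕ, 2 ≤ j → ((j : ℕ∞) : WithBot ℕ∞) ≤ mdim R M →
    ∀ p ∈ attachedPrimes R ↥(locH R m j M), p ≠ m → x ∉ p

/-- A sequence `x 0, ..., x (t-1)` of elements of `m` is an `M`-sequential sequence if each
`x i` is an `M/(x 0, ..., x (i-1))M`-sequential element. -/
def IsSequentialSeq (R : Type) [CommRing R] (m : Ideal R)
    (M : Type) [AddCommGroup M] [Module R M] {t : ℕ} (x : Fin t → R) : Prop :=
  ∀ i : Fin t,
    IsSequentialElem R m
      (M ⧸ (Ideal.span (x '' {j | j < i}) • (⊤ : Submodule R M))) (x i)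

/-- A sequence `x 0, ..., x (t-1)` of elements of `m` is an `M`-sequential f-sequence if each
`x i` is an `M/(x 0, ..., x (i-1))M`-sequential f-element. -/
def IsSequentialFSeq (R : Type) [CommRing R] (m : Ideal R)
    (M : Type) [AddCommGroup M] [Module R M] {t : ℕ} (x : Fin t → R) : Prop :=
  ∀ i : Fin t,
    IsSequentialFElem R m
      (M ⧸ (Ideal.span (x '' {j | j < i}) • (⊤ : Submodule R M))) (x i)

/-- A filter regular sequence of `M`: a sequence of elements of `m` such that each `x i`
avoids every associated prime `p` of `M/(x 0, ..., x (i-1))M` with `dim R/p > 0`. -/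
def IsFilterRegularSeq (R : Type) [CommRing R] (m : Ideal R)
    (M : Type) [AddCommGroup M] [Module R M] {t : ℕ} (x : Fin t → R) : Prop :=
  (∀ i, x i ∈ m) ∧
    ∀ i : Fin t,
      ∀ p ∈ associatedPrimes R
        (M ⧸ (Ideal.span (x '' {j | j < i}) • (⊤ : Submodule R M))),
        0 < ringKrullDim (R ⧸ p) → x i ∉ p

/-- A generalized regular sequence of `M`: a sequence of elements of `m` such that each `x i`
avoids every associated prime `p` of `M/(x 0, ..., x (i-1))M` with `dim R/p > 1`. -/
def IsGenRegularSeq (R : Type) [CommRing R] (m : Ideal R)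
    (M : Type) [AddCommGroup M] [Module R M] {t : ℕ} (x : Fin t → R) : Prop :=
  (∀ i, x i ∈ m) ∧
    ∀ i : Fin t,
      ∀ p ∈ associatedPrimes R
        (M ⧸ (Ideal.span (x '' {j | j < i}) • (⊤ : Submodule R M))),
        1 < ringKrullDim (R ⧸ p) → x i ∉ p

/-- A system of parameters of `M`: `d = dim M` elements of `m` such that
`M/(x 0, ..., x (d-1))M` has finite length. -/
def IsSOP (R : Type) [CommRing R] (m : Ideal R)
    (M : Type) [AddCommGroup M] [Module R M] {d : ℕ} (x : Fin d → R) : Prop :=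
  mdim R M = ((d : ℕ∞) : WithBot ℕ∞) ∧ (∀ i, x i ∈ m) ∧
    IsFiniteLength R (M ⧸ (Ideal.span (Set.range x) • (⊤ : Submodule R M)))

/-- `M` is a Cohen-Macaulay module (w.r.t. the maximal ideal `m`):
`H^i_m(M) = 0` for all `i < dim M`. -/
def IsCohenMacaulayMod (R : Type) [CommRing R] (m : Ideal R)
    (M : Type) [AddCommGroup M] [Module R M] : Prop :=
  ∀ i : ℕ, ((i : ℕ∞) : WithBot ℕ∞) < mdim R M → Subsingleton ↥(locH R m i M)

/-- `M` is a generalized Cohen-Macaulay module (w.r.t. the maximal ideal `m`):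
`H^i_m(M)` has finite length for all `i < dim M`. -/
def IsGenCohenMacaulayMod (R : Type) [CommRing R] (m : Ideal R)
    (M : Type) [AddCommGroup M] [Module R M] : Prop :=
  ∀ i : ℕ, ((i : ℕ∞) : WithBot ℕ∞) < mdim R M → IsFiniteLength R ↥(locH R m i M)

/-- The submodule of elements of `M` annihilated by the ideal `I`. -/
def annIn (R : Type) [CommRing R] (I : Ideal R)
    (M : Type) [AddCommGroup M] [Module R M] : Submodule R M where
  carrier := {x | ∀ r ∈ I, r • x = 0}
  add_mem' := fun {a b} ha hb r hr => by rw [smul_add, ha r hr, hb r hr, add_zero]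
  zero_mem' := fun r _ => smul_zero r
  smul_mem' := fun c x hx r hr => by rw [smul_comm, hx r hr, smul_zero]

/-- The `m`-power torsion submodule of `M`; this is `H^0_m(M)` as a submodule of `M`. -/
def powerTorsion (R : Type) [CommRing R] (m : Ideal R)
    (M : Type) [AddCommGroup M] [Module R M] : Submodule R M :=
  ⨆ n : ℕ, annIn R (m ^ n) M

/-- The quotient of the submodule `N` by the submodule `P` (intended for `P ≤ N`). -/
abbrev subQuot (R : Type) [CommRing R] {M : Type} [AddCommGroup M] [Module R M]
    (N P : Submodule R M) : Type :=
  N ⧸ (P.comap N.subtype)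

/-- `D 0 = M ⊃ D 1 ⊃ ... ⊃ D t = H^0_m(M)` is the dimension filtration of `M`:
for `1 ≤ i ≤ t`, `D i` is the largest submodule of `M` of dimension `< dim (D (i-1))`. -/
def IsDimFiltration (R : Type) [CommRing R] (m : Ideal R)
    (M : Type) [AddCommGroup M] [Module R M] (t : ℕ) (D : ℕ → Submodule R M) : Prop :=
  D 0 = ⊤ ∧ D t = powerTorsion R m M ∧
    ∀ i : ℕ, 1 ≤ i → i ≤ t →
      mdim R ↥(D i) < mdim R ↥(D (i - 1)) ∧
        ∀ N : Submodule R M, mdim R ↥N < mdim R ↥(D (i - 1)) → N ≤ D i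

/-- `M` is sequentially Cohen-Macaulay: every quotient `D (i-1) / D i` of the dimension
filtration of `M` is Cohen-Macaulay. -/
def IsSeqCM (R : Type) [CommRing R] (m : Ideal R)
    (M : Type) [AddCommGroup M] [Module R M] : Prop :=
  ∃ (t : ℕ) (D : ℕ → Submodule R M), IsDimFiltration R m M t D ∧
    ∀ i : ℕ, 1 ≤ i → i ≤ t → IsCohenMacaulayMod R m (subQuot R (D (i - 1)) (D i))

/-- `M` is sequentially generalized Cohen-Macaulay: every quotient `D (i-1) / D i` of the
dimension filtration of `M` is generalized Cohen-Macaulay. -/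
def IsSeqGCM (R : Type) [CommRing R] (m : Ideal R)
    (M : Type) [AddCommGroup M] [Module R M] : Prop :=
  ∃ (t : ℕ) (D : ℕ → Submodule R M), IsDimFiltration R m M t D ∧
    ∀ i : ℕ, 1 ≤ i → i ≤ t → IsGenCohenMacaulayMod R m (subQuot R (D (i - 1)) (D i))

/-- `M` is unmixed: `dim (R̂ / P) = dim M` for every associated prime `P` of the `m`-adic
completion of `M` over the `m`-adic completion of `R`. -/
def IsUnmixedMod (R : Type) [CommRing R] (m : Ideal R)
    (M : Type) [AddCommGroup M] [Module R M] : Prop :=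
  ∀ P ∈ associatedPrimes (AdicCompletion m R) (AdicCompletion m M),
    ringKrullDim (AdicCompletion m R ⧸ P) = mdim R M

/-- A Noetherian local ring `S` is Cohen-Macaulay if it is Cohen-Macaulay as a module
over itself. -/
def IsCMLocalRing (S : Type) [CommRing S] [IsLocalRing S] : Prop :=
  IsCohenMacaulayMod S (IsLocalRing.maximalIdeal S) S

/-- `A` is a quotient of a Cohen-Macaulay Noetherian local ring by a proper ideal. -/
def IsQuotientOfCMLocalRing (A : Type) [CommRing A] : Prop :=
  ∃ (S : Type) (_ : CommRing S) (_ : IsNoetherianRing S) (_ : IsLocalRing S),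
    IsCMLocalRing S ∧ ∃ f : S →+* A, Function.Surjective f ∧ RingHom.ker f ≠ ⊤

end

section Aux

variable {R : Type} [CommRing R]

/-- If every prime containing `I` contains `J`, then `dim R/I ≤ dim R/J`. -/
theorem ringKrullDim_quot_le_quot {I J : Ideal R}
    (h : ∀ p : Ideal R, p.IsPrime → I ≤ p → J ≤ p) :
    ringKrullDim (R ⧸ I) ≤ ringKrullDim (R ⧸ J) := by
  have key : ∀ q : PrimeSpectrum (R ⧸ I),
      J ≤ q.asIdeal.comap (Ideal.Quotient.mk I) := by
    intro q
    haveI := q.isPrime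
    refine h _ (Ideal.IsPrime.comap _) fun y hy => ?_
    show Ideal.Quotient.mk I y ∈ q.asIdeal
    rw [Ideal.Quotient.eq_zero_iff_mem.mpr hy]
    exact q.asIdeal.zero_mem
  have hprime : ∀ q : PrimeSpectrum (R ⧸ I),
      ((q.asIdeal.comap (Ideal.Quotient.mk I)).map (Ideal.Quotient.mk J)).IsPrime := by
    intro q
    haveI := q.isPrime
    exact Ideal.map_isPrime_of_surjective Ideal.Quotient.mk_surjective
      (by rw [Ideal.mk_ker]; exact key q)
  refine Order.krullDim_le_of_strictMono (fun q => ⟨_, hprime q⟩) ?_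
  intro a b hab
  have hc : a.asIdeal.comap (Ideal.Quotient.mk I) < b.asIdeal.comap (Ideal.Quotient.mk I) := by
    refine lt_of_le_of_ne (Ideal.comap_mono hab.le) fun he => hab.ne ?_
    exact PrimeSpectrum.ext
      (Ideal.comap_injective_of_surjective _ Ideal.Quotient.mk_surjective he)
  rw [← PrimeSpectrum.asIdeal_lt_asIdeal]
  refine lt_of_le_of_ne (Ideal.map_mono hc.le) fun he => hc.ne ?_
  have ha := Ideal.comap_map_of_surjective (Ideal.Quotient.mk J)
    Ideal.Quotient.mk_surjective (a.asIdeal.comap (Ideal.Quotient.mk I))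
  have hb := Ideal.comap_map_of_surjective (Ideal.Quotient.mk J)
    Ideal.Quotient.mk_surjective (b.asIdeal.comap (Ideal.Quotient.mk I))
  have hker : Ideal.comap (Ideal.Quotient.mk J) (⊥ : Ideal (R ⧸ J)) = J := by
    rw [← RingHom.ker_eq_comap_bot, Ideal.mk_ker]
  have := congrArg (Ideal.comap (Ideal.Quotient.mk J)) he
  rw [ha, hb, hker] at this
  rwa [sup_eq_left.mpr (key a), sup_eq_left.mpr (key b)] at this

variable {M : Type} [AddCommGroup M] [Module R M]

/-- Key "determinant trick" step: if `p` is a prime containing `Ann M` and `x`,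
then `p` contains `Ann (M / xM)`. -/
theorem ann_quot_le_prime [Module.Finite R M] (x : R) (p : Ideal R) (hp : p.IsPrime)
    (hM : Module.annihilator R M ≤ p) (hx : x ∈ p) :
    Module.annihilator R (M ⧸ (Ideal.span {x} • (⊤ : Submodule R M))) ≤ p := by
  intro r hr
  have hr' : ∀ m : M, r • m ∈ (Ideal.span {x} • (⊤ : Submodule R M)) := by
    intro m
    have := Module.mem_annihilator.mp hr (Submodule.Quotient.mk m)
    rwa [← Submodule.Quotient.mk_smul, Submodule.Quotient.mk_eq_zero] at this
  have hrange : LinearMap.range (r • (LinearMap.id : M →ₗ[R] M)) ≤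
      Ideal.span {x} • (⊤ : Submodule R M) := by
    rintro _ ⟨m, rfl⟩
    exact hr' m
  obtain ⟨P, hmonic, -, hcoeff, haeval⟩ :=
    LinearMap.exists_monic_and_coeff_mem_pow_and_aeval_eq_zero_of_range_le_smul R
      (r • (LinearMap.id : M →ₗ[R] M)) (Ideal.span {x}) hrange
  have hfeq : (r • (LinearMap.id : M →ₗ[R] M)) = algebraMap R (Module.End R M) r := by
    ext m; simp [Module.algebraMap_end_apply]
  rw [hfeq, Polynomial.aeval_algebraMap_apply_eq_algebraMap_eval] at haeval
  have hann : P.eval r ∈ Module.annihilator R M := by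
    rw [Module.mem_annihilator]
    intro m
    have := congrFun (congrArg DFunLike.coe haeval) m
    simpa [Module.algebraMap_end_apply] using this
  -- r ^ natDegree ∈ p
  have hsum : P.eval r = ∑ k ∈ Finset.range (P.natDegree + 1), P.coeff k * r ^ k := by
    rw [Polynomial.eval_eq_sum_range]
  have hpow : r ^ P.natDegree ∈ p := by
    have h1 : P.eval r ∈ p := hM hann
    rw [hsum, Finset.sum_range_succ, hmonic.coeff_natDegree, one_mul] at h1
    have h2 : ∑ k ∈ Finset.range P.natDegree, P.coeff k * r ^ k ∈ p := by
      refine Ideal.sum_mem _ fun k hk => Ideal.mul_mem_right _ _ ?_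
      have hc := hcoeff k
      have hkn : 1 ≤ P.natDegree - k := by
        have := Finset.mem_range.mp hk; omega
      have : (Ideal.span {x} : Ideal R) ^ (P.natDegree - k) ≤ Ideal.span {x} :=
        Ideal.pow_le_self (by omega)
      have hxp : Ideal.span {x} ≤ p := by
        rwa [Ideal.span_le, Set.singleton_subset_iff]
      exact hxp (this hc)
    have := p.sub_mem h1 h2
    simpa using this
  exact hp.mem_of_pow_mem _ hpow

end Aux

open Pointwise

/-- The submodule computation in the proof of Lemma 3.3: if `D₁` is the largest submodule of
`M` of dimension `< d` and `x` is a parameter element of `M` annihilating `D₁`, then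
`D₁ = (0 :_M x) = (0 :_M x²)` and `D₁ ∩ xM = 0`. -/
theorem parameter_element_annihilating (R : Type) [CommRing R] [IsNoetherianRing R]
    [IsLocalRing R]
    (M : Type) [AddCommGroup M] [Module R M] [Module.Finite R M] [Nontrivial M]
    (d : ℕ) (hd1 : 1 ≤ d) (hd : mdim R M = ((d : ℕ∞) : WithBot ℕ∞))
    (D1 : Submodule R M)
    (hD1lt : mdim R ↥D1 < mdim R M)
    (hD1max : ∀ N : Submodule R M, mdim R ↥N < mdim R M → N ≤ D1)
    (x : R) (hxm : x ∈ IsLocalRing.maximalIdeal R)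
    (hpar : mdim R (M ⧸ (Ideal.span {x} • (⊤ : Submodule R M))) =
      (((d - 1 : ℕ) : ℕ∞) : WithBot ℕ∞))
    (hann : ∀ y ∈ D1, x • y = 0) :
    D1 = Submodule.torsionBy R M x ∧
      Submodule.torsionBy R M x = Submodule.torsionBy R M (x ^ 2) ∧
      D1 ⊓ (Ideal.span {x} • (⊤ : Submodule R M)) = ⊥ := by
    classical
  set T := Submodule.torsionBy R M (x ^ 2) with hTdef
  have hx2T : x ^ 2 ∈ Module.annihilator R ↥T := by
    rw [Module.mem_annihilator]
    intro t
    ext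
    exact t.2
  have hAnnMT : Module.annihilator R M ≤ Module.annihilator R ↥T := by
    intro r hr
    rw [Module.mem_annihilator] at hr ⊢
    intro t
    ext
    exact hr (t : M)
  have hTdim : mdim R ↥T ≤ mdim R (M ⧸ (Ideal.span {x} • (⊤ : Submodule R M))) := by
    refine ringKrullDim_quot_le_quot fun p hp hle => ?_
    have hxp : x ∈ p := hp.mem_of_pow_mem 2 (hle hx2T)
    exact ann_quot_le_prime x p hp (hAnnMT.trans hle) hxp
  have hTlt : mdim R ↥T < mdim R M := by
    refine lt_of_le_of_lt (hTdim.trans_eq hpar) ?_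
    rw [hd]
    exact_mod_cast (by omega : d - 1 < d)
  have hTle : T ≤ D1 := hD1max T hTlt
  have hD1T : D1 ≤ Submodule.torsionBy R M x := fun y hy =>
    (Submodule.mem_torsionBy_iff _ _).mpr (hann y hy)
  have hxx2 : Submodule.torsionBy R M x ≤ T :=
    Submodule.torsionBy_le_torsionBy_of_dvd x (x ^ 2) (dvd_pow_self x two_ne_zero)
  refine ⟨le_antisymm hD1T (hxx2.trans hTle), le_antisymm hxx2 (hTle.trans hD1T), ?_⟩
  rw [eq_bot_iff]
  rintro z ⟨hz1, hz2⟩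
  rw [Submodule.ideal_span_singleton_smul] at hz2
  have hz2' : z ∈ x • ((⊤ : Submodule R M) : Set M) := by
    rw [← Submodule.coe_pointwise_smul]; exact hz2
  obtain ⟨m, -, rfl⟩ := Set.mem_smul_set.mp hz2'
  have h1 : x • x • m = 0 := hann _ hz1
  have hmT : m ∈ T := by
    rw [hTdef, Submodule.mem_torsionBy_iff, pow_two, mul_smul]
    exact h1
  have : x • m = 0 := hann m (hTle hmT)
  simp [this]
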